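/- Let ψ₁, ψ₂, μ : [0,T] → ℝ with ψ = (ψ₁, ψ₂) absolutely continuous and μ constant on an interval Δ ⊆ [0,T]. Suppose on a measurable set S₁ ⊆ Δ we have ψ₁(t) = μ(t), ψ₂(t) ≠ 0, and the adjoint equation ψ̇₁(t) = −ψ₂(t)·g(t) holds a.e. on Δ, where g(t) ≠ 0 for all t ∈ S₁. Then S₁ has Lebesgue measure zero. -/

import Mathlib

open MeasureTheory

/-- Proposition 2(a): with μ constant on an interval Δ, if on a measurable set
S₁ ⊆ Δ we have ψ₁ = μ, ψ₂ ≠ 0, g ≠ 0, and the adjoint equation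
ψ̇₁ = −ψ₂·g holds a.e. on Δ, then S₁ is Lebesgue-null. -/
theorem stmt_4 (T : ℝ) (ψ₁ ψ₂ μ g : ℝ → ℝ) (Δ S₁ : Set ℝ)
    (hΔ : Δ ⊆ Set.Icc 0 T) (hΔint : Δ.OrdConnected)
    (hμ : ∃ m : ℝ, ∀ t ∈ Δ, μ t = m)
    (hS : S₁ ⊆ Δ) (hSm : MeasurableSet S₁)
    (hψ₁ : ∀ t ∈ S₁, ψ₁ t = μ t)
    (hψ₂ : ∀ t ∈ S₁, ψ₂ t ≠ 0)
    (hg : ∀ t ∈ S₁, g t ≠ 0)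
    (hadj : ∀ᵐ t, t ∈ Δ → HasDerivAt ψ₁ (-(ψ₂ t * g t)) t) :
    volume S₁ = 0 := by
  obtain ⟨m, hm⟩ := hμ
  by_contra hvol
  have hres : volume.restrict S₁ ≠ 0 := by
    simpa [Measure.restrict_eq_zero] using hvol
  haveI : (ae (volume.restrict S₁)).NeBot := ae_neBot.mpr hres
  have h1 := Besicovitch.ae_tendsto_measure_inter_div volume S₁
  have h2 : ∀ᵐ t ∂(volume.restrict S₁), t ∈ Δ → HasDerivAt ψ₁ (-(ψ₂ t * g t)) t :=
    ae_restrict_of_ae hadj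
  have h3 : ∀ᵐ t ∂(volume.restrict S₁), t ∈ S₁ := ae_restrict_mem hSm
  obtain ⟨t, ⟨hdens, hadj'⟩, htS⟩ := ((h1.and h2).and h3).exists
  have hderiv : HasDerivAt ψ₁ (-(ψ₂ t * g t)) t := hadj' (hS htS)
  have hd0 : -(ψ₂ t * g t) ≠ 0 := by
    simp [hψ₂ t htS, hg t htS]
  -- t is an accumulation point of S₁
  have hacc : (nhdsWithin t (S₁ \ {t})).NeBot := by
    by_contra hbot
    rw [Filter.not_neBot, ← Filter.empty_mem_iff_bot, mem_nhdsWithin] at hbot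
    obtain ⟨U, hUo, htU, hU⟩ := hbot
    obtain ⟨r, hr, hball⟩ := Metric.isOpen_iff.mp hUo t htU
    -- then S₁ ∩ closedBall t r' ⊆ {t} for r' < r, so the density ratio tends to 0
    have hzero : ∀ r' ∈ Set.Ioo (0:ℝ) r,
        volume (S₁ ∩ Metric.closedBall t r') / volume (Metric.closedBall t r') = 0 := by
      intro r' hr'
      have hsub : S₁ ∩ Metric.closedBall t r' ⊆ {t} := by
        intro x ⟨hx1, hx2⟩
        by_contra hxt
        have : x ∈ U ∩ (S₁ \ {t}) := by
          refine ⟨hball ?_, hx1, hxt⟩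
          exact lt_of_le_of_lt (by simpa [Metric.mem_closedBall] using hx2) hr'.2
        exact hU this
      have : volume (S₁ ∩ Metric.closedBall t r') = 0 :=
        le_antisymm (le_trans (measure_mono hsub) (by simp)) zero_le
      simp [this]
    have hev : ∀ᶠ r' in nhdsWithin 0 (Set.Ioi (0:ℝ)),
        volume (S₁ ∩ Metric.closedBall t r') / volume (Metric.closedBall t r') = 0 := by
      filter_upwards [Ioo_mem_nhdsGT_of_mem (by simp [hr] : (0:ℝ) ∈ Set.Ico 0 r)] with r' hr'
      exact hzero r' hr'
    have := hdens.congr' hev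
    have h10 : (1 : ENNReal) = 0 :=
      tendsto_nhds_unique this tendsto_const_nhds
    simp at h10
  -- slope is 0 along S₁ \ {t}, but tends to the nonzero derivative
  have hslope : Filter.Tendsto (slope ψ₁ t) (nhdsWithin t {t}ᶜ) (nhds (-(ψ₂ t * g t))) :=
    hasDerivAt_iff_tendsto_slope.mp hderiv
  have hmono : nhdsWithin t (S₁ \ {t}) ≤ nhdsWithin t {t}ᶜ := by
    apply nhdsWithin_mono
    intro x hx
    exact hx.2
  have hslope' : Filter.Tendsto (slope ψ₁ t) (nhdsWithin t (S₁ \ {t}))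
      (nhds (-(ψ₂ t * g t))) := hslope.mono_left hmono
  have hzeroslope : Filter.Tendsto (slope ψ₁ t) (nhdsWithin t (S₁ \ {t})) (nhds 0) := by
    have : ∀ᶠ x in nhdsWithin t (S₁ \ {t}), slope ψ₁ t x = 0 := by
      filter_upwards [self_mem_nhdsWithin] with x hx
      have hx1 : ψ₁ x = m := (hψ₁ x hx.1).trans (hm x (hS hx.1))
      have ht1 : ψ₁ t = m := (hψ₁ t htS).trans (hm t (hS htS))
      simp [slope, hx1, ht1]
    exact Filter.Tendsto.congr' (Filter.EventuallyEq.symm this) tendsto_const_nhds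
  exact hd0 (tendsto_nhds_unique hslope' hzeroslope)
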